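/- Let μ₀ ∈ C²([0,∞)). Then for all x ∈ ℝ³∖{0} and v ∈ ℝ³ (with r=|x|, w=(x·v)/r) the iterated Poisson bracket satisfies {E, {E, rw}} = −γ e^{2μ₀(r)} w ( r μ₀''(r) + μ₀'(r) + 2μ₀'(r)/⟨v⟩² ), where rw = x·v. -/

import Mathlib

noncomputable section

open Real MeasureTheory

abbrev E3 := EuclideanSpace ℝ (Fin 3)

/-- Euclidean dot product on `E3`. -/
def dot3 (x v : E3) : ℝ := ∑ i, x i * v i

/-- `⟨v⟩ = √(1+γ|v|²)`. -/
def jap (γ : ℝ) (v : E3) : ℝ := Real.sqrt (1 + γ * ‖v‖ ^ 2)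

/-- The radial momentum `w = (x·v)/|x|`. -/
def wrad (x v : E3) : ℝ := dot3 x v / ‖x‖

/-- The particle energy `E(x,v) = e^{μ₀(|x|)}⟨v⟩`. -/
def energy (γ : ℝ) (μ₀ : ℝ → ℝ) (z : E3 × E3) : ℝ :=
  Real.exp (μ₀ ‖z.1‖) * jap γ z.2

/-- The Poisson bracket `{f,g} = ∂ₓf·∂ᵥg − ∂ᵥf·∂ₓg`. -/
def pb (f g : E3 × E3 → ℝ) (z : E3 × E3) : ℝ :=
  ∑ i : Fin 3,
    (fderiv ℝ f z (EuclideanSpace.single i 1, 0) * fderiv ℝ g z (0, EuclideanSpace.single i 1)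
     - fderiv ℝ f z (0, EuclideanSpace.single i 1) * fderiv ℝ g z (EuclideanSpace.single i 1, 0))

/-- Action of a `3×3` matrix on `E3`. -/
def matAct (A : Matrix (Fin 3) (Fin 3) ℝ) (x : E3) : E3 :=
  (WithLp.equiv 2 (Fin 3 → ℝ)).symm (A.mulVec ((WithLp.equiv 2 (Fin 3 → ℝ)) x))

/-- Spherical symmetry: invariance under the canonical action of SO(3). -/
def SphSym (h : E3 × E3 → ℝ) : Prop :=
  ∀ A : Matrix (Fin 3) (Fin 3) ℝ, A ∈ Matrix.orthogonalGroup (Fin 3) ℝ → A.det = 1 →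
    ∀ x v : E3, h (matAct A x, matAct A v) = h (x, v)

/-- Radial unit vector, used to define radial representatives of
spherically symmetric quantities. -/
def er : E3 := EuclideanSpace.single 0 1

/-- The steady state distribution `f₀ = φ(E)`. -/
def f0 (γ : ℝ) (μ₀ φ : ℝ → ℝ) : E3 × E3 → ℝ := fun z => φ (energy γ μ₀ z)


open scoped RealInnerProductSpace

lemma hasFDerivAt_norm3 (x : E3) (hx : x ≠ 0) :
    HasFDerivAt (fun y : E3 => ‖y‖) (‖x‖⁻¹ • innerSL ℝ x) x := by
  have h1 : HasFDerivAt (fun y : E3 => ‖y‖ ^ 2) (2 • innerSL ℝ x) x :=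
    (hasStrictFDerivAt_norm_sq x).hasFDerivAt
  have hn : ‖x‖ ≠ 0 := norm_ne_zero_iff.mpr hx
  have hsq : (‖x‖ : ℝ) ^ 2 ≠ 0 := pow_ne_zero _ hn
  have h2 := (Real.hasDerivAt_sqrt hsq).comp_hasFDerivAt x h1
  have heq : (fun y : E3 => Real.sqrt (‖y‖ ^ 2)) = fun y : E3 => ‖y‖ := by
    funext y; rw [Real.sqrt_sq (norm_nonneg y)]
  rw [show ((fun x => Real.sqrt x) ∘ fun y : E3 => ‖y‖ ^ 2) = fun y : E3 => ‖y‖ from heq] at h2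
  refine h2.congr_fderiv ?_
  rw [Real.sqrt_sq (norm_nonneg x)]
  ext u
  simp [two_smul]
  field_simp
  ring

lemma jap_pos (γ : ℝ) (hγ : 0 < γ) (v : E3) : 0 < jap γ v := by
  have : (0:ℝ) < 1 + γ * ‖v‖ ^ 2 := by positivity
  exact Real.sqrt_pos.mpr this

lemma jap_sq (γ : ℝ) (hγ : 0 < γ) (v : E3) : jap γ v ^ 2 = 1 + γ * ‖v‖ ^ 2 := by
  have : (0:ℝ) ≤ 1 + γ * ‖v‖ ^ 2 := by positivity
  exact Real.sq_sqrt this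

lemma hasFDerivAt_jap (γ : ℝ) (hγ : 0 < γ) (v : E3) :
    HasFDerivAt (jap γ) ((γ / jap γ v) • innerSL ℝ v) v := by
  have h0 : (0:ℝ) < 1 + γ * ‖v‖ ^ 2 := by positivity
  have h1 : HasFDerivAt (fun u : E3 => 1 + γ * ‖u‖ ^ 2) (γ • (2 • innerSL ℝ v)) v :=
    (((hasStrictFDerivAt_norm_sq v).hasFDerivAt).const_mul γ).const_add 1
  have h2 := (Real.hasDerivAt_sqrt h0.ne').comp_hasFDerivAt v h1
  refine h2.congr_fderiv ?_
  ext u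
  simp [jap, two_smul]
  rw [show √(1 + γ * ‖v‖ ^ 2) = jap γ v from rfl]
  have := (jap_pos γ hγ v).ne'
  field_simp
  ring

/-- The model continuous linear map with "gradient" `(a x, b v)`. -/
def Lc (a b : ℝ) (x v : E3) : (E3 × E3) →L[ℝ] ℝ :=
  a • ((innerSL ℝ x).comp (ContinuousLinearMap.fst ℝ E3 E3)) +
  b • ((innerSL ℝ v).comp (ContinuousLinearMap.snd ℝ E3 E3))

lemma Lc_apply (a b : ℝ) (x v : E3) (p : E3 × E3) :
    Lc a b x v p = a * ⟪x, p.1⟫ + b * ⟪v, p.2⟫ := by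
  simp [Lc]

lemma key (γ : ℝ) (hγ : 0 < γ) (p q : ℝ → ℝ) (p' q' : ℝ) (x v : E3) (hx : x ≠ 0)
    (hp : HasDerivAt p p' ‖x‖) (hq : HasDerivAt q q' (jap γ v)) :
    HasFDerivAt (fun z : E3 × E3 => p ‖z.1‖ * q (jap γ z.2))
      (Lc (q (jap γ v) * p' / ‖x‖) (p ‖x‖ * (q' * γ / jap γ v)) x v) (x, v) := by
  have hP : HasFDerivAt (fun y : E3 => p ‖y‖) (p' • (‖x‖⁻¹ • innerSL ℝ x)) x :=
    hp.comp_hasFDerivAt x (hasFDerivAt_norm3 x hx)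
  have hQ : HasFDerivAt (fun u : E3 => q (jap γ u)) (q' • ((γ / jap γ v) • innerSL ℝ v)) v :=
    hq.comp_hasFDerivAt v (hasFDerivAt_jap γ hγ v)
  have hPz : HasFDerivAt (fun z : E3 × E3 => p ‖z.1‖)
      ((p' • (‖x‖⁻¹ • innerSL ℝ x)).comp (ContinuousLinearMap.fst ℝ E3 E3)) (x, v) :=
    by have h := hP.comp (x, v) (hasFDerivAt_fst (𝕜 := ℝ) (p := (x, v))); exact h
  have hQz : HasFDerivAt (fun z : E3 × E3 => q (jap γ z.2))
      ((q' • ((γ / jap γ v) • innerSL ℝ v)).comp (ContinuousLinearMap.snd ℝ E3 E3)) (x, v) :=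
    by have h := hQ.comp (x, v) (hasFDerivAt_snd (𝕜 := ℝ) (p := (x, v))); exact h
  have := hPz.mul hQz
  refine this.congr_fderiv ?_
  ext u
  · simp [Lc]
    have hn : ‖x‖ ≠ 0 := norm_ne_zero_iff.mpr hx
    field_simp
  · simp [Lc]
    have := (jap_pos γ hγ v).ne'
    field_simp

lemma dot3_eq_inner (x v : E3) : dot3 x v = ⟪x, v⟫ := by
  simp [dot3, PiLp.inner_apply, RCLike.inner_apply]
  exact Finset.sum_congr rfl fun i _ => mul_comm _ _

lemma inner_self3 (x : E3) : ⟪x, x⟫ = ‖x‖ ^ 2 := real_inner_self_eq_norm_sq x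

lemma hasFDerivAt_dot (x v : E3) :
    HasFDerivAt (fun z : E3 × E3 => dot3 z.1 z.2)
      ((fderivInnerCLM ℝ (x, v)).comp
        ((ContinuousLinearMap.fst ℝ E3 E3).prod (ContinuousLinearMap.snd ℝ E3 E3))) (x, v) := by
  have h := HasFDerivAt.inner ℝ (f := fun z : E3 × E3 => z.1) (g := fun z : E3 × E3 => z.2)
    (hasFDerivAt_fst (p := (x, v))) (hasFDerivAt_snd (p := (x, v)))
  have : (fun z : E3 × E3 => dot3 z.1 z.2) = fun z : E3 × E3 => ⟪z.1, z.2⟫ := by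
    funext z; exact dot3_eq_inner _ _
  rw [this]
  exact h

lemma inner_single (y : E3) (i : Fin 3) : ⟪y, EuclideanSpace.single i 1⟫ = y i := by
  rw [EuclideanSpace.inner_single_right]; simp

lemma inner_single' (y : E3) (i : Fin 3) : ⟪EuclideanSpace.single i 1, y⟫ = y i := by
  rw [EuclideanSpace.inner_single_left]; simp

lemma pb_eval (f g : E3 × E3 → ℝ) (z : E3 × E3) (Lf Lg : (E3 × E3) →L[ℝ] ℝ)
    (hf : HasFDerivAt f Lf z) (hg : HasFDerivAt g Lg z) :
    pb f g z = ∑ i : Fin 3,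
      (Lf (EuclideanSpace.single i 1, 0) * Lg (0, EuclideanSpace.single i 1)
       - Lf (0, EuclideanSpace.single i 1) * Lg (EuclideanSpace.single i 1, 0)) := by
  simp [pb, hf.fderiv, hg.fderiv]

-- pb of an Lc-function against dot3
lemma pb_Lc_dot (f : E3 × E3 → ℝ) (a b : ℝ) (x v : E3)
    (hf : HasFDerivAt f (Lc a b x v) (x, v)) :
    pb f (fun z => dot3 z.1 z.2) (x, v) = a * ‖x‖ ^ 2 - b * ‖v‖ ^ 2 := by
  rw [pb_eval f _ (x, v) _ _ hf (hasFDerivAt_dot x v)]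
  have e1 : ∀ i : Fin 3, Lc a b x v (EuclideanSpace.single i 1, 0) = a * x i := by
    intro i; rw [Lc_apply]; simp [inner_single]
  have e2 : ∀ i : Fin 3, Lc a b x v ((0 : E3), EuclideanSpace.single i 1) = b * v i := by
    intro i; rw [Lc_apply]; simp [inner_single]
  have e3 : ∀ i : Fin 3,
      ((fderivInnerCLM ℝ (x, v)).comp
        ((ContinuousLinearMap.fst ℝ E3 E3).prod (ContinuousLinearMap.snd ℝ E3 E3)))
        (EuclideanSpace.single i 1, (0 : E3)) = v i := by
    intro i
    simp [fderivInnerCLM_apply, inner_single']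
  have e4 : ∀ i : Fin 3,
      ((fderivInnerCLM ℝ (x, v)).comp
        ((ContinuousLinearMap.fst ℝ E3 E3).prod (ContinuousLinearMap.snd ℝ E3 E3)))
        ((0 : E3), EuclideanSpace.single i 1) = x i := by
    intro i
    simp [fderivInnerCLM_apply, inner_single]
  simp only [e1, e2, e3, e4]
  have step : ∀ i : Fin 3, a * x i * x i - b * v i * v i
      = a * (x i * v i * 0 + x i * x i) - b * (v i * v i) := fun i => by ring
  rw [Finset.sum_congr rfl (fun i _ => step i), Finset.sum_sub_distrib,
    ← Finset.mul_sum, ← Finset.mul_sum]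
  have da : ∑ i : Fin 3, (x i * v i * 0 + x i * x i) = dot3 x x := by
    simp [dot3]
  rw [da, show ∑ i : Fin 3, v i * v i = dot3 v v from rfl,
    dot3_eq_inner, dot3_eq_inner, inner_self3, inner_self3]

-- pb of two Lc-functions
lemma pb_Lc_Lc (f g : E3 × E3 → ℝ) (a b c d : ℝ) (x v : E3)
    (hf : HasFDerivAt f (Lc a b x v) (x, v)) (hg : HasFDerivAt g (Lc c d x v) (x, v)) :
    pb f g (x, v) = (a * d - b * c) * dot3 x v := by
  rw [pb_eval f g (x, v) _ _ hf hg]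
  have e1 : ∀ (a b : ℝ) (i : Fin 3), Lc a b x v (EuclideanSpace.single i 1, 0) = a * x i := by
    intro a b i; rw [Lc_apply]; simp [inner_single]
  have e2 : ∀ (a b : ℝ) (i : Fin 3), Lc a b x v ((0 : E3), EuclideanSpace.single i 1) = b * v i := by
    intro a b i; rw [Lc_apply]; simp [inner_single]
  simp only [e1, e2]
  have step : ∀ i : Fin 3, a * x i * (d * v i) - b * v i * (c * x i)
      = (a * d - b * c) * (x i * v i) := fun i => by ring
  rw [Finset.sum_congr rfl (fun i _ => step i), ← Finset.mul_sum]
  rfl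

lemma deriv_mu0_hasDerivAt (mu0 : ℝ → ℝ) (hmu0 : ContDiff ℝ 2 mu0) (r : ℝ) :
    HasDerivAt (deriv mu0) (deriv (deriv mu0) r) r := by
  have h2 : ContDiff ℝ 1 (deriv mu0) := by
    have := (contDiff_succ_iff_deriv (n := 1)).mp (by exact_mod_cast hmu0)
    exact this.2.2
  exact ((h2.differentiable one_ne_zero).differentiableAt).hasDerivAt

lemma energy_hasFDerivAt (γ : ℝ) (hγ : 0 < γ) (mu0 : ℝ → ℝ) (hmu0 : ContDiff ℝ 2 mu0)
    (x : E3) (hx : x ≠ 0) (v : E3) :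
    HasFDerivAt (energy γ mu0)
      (Lc (jap γ v * (Real.exp (mu0 ‖x‖) * deriv mu0 ‖x‖) / ‖x‖)
          (Real.exp (mu0 ‖x‖) * (1 * γ / jap γ v)) x v) (x, v) := by
  have hp : HasDerivAt (fun r => Real.exp (mu0 r)) (Real.exp (mu0 ‖x‖) * deriv mu0 ‖x‖) ‖x‖ :=
    (((hmu0.differentiable (by norm_num)) ‖x‖).hasDerivAt).exp
  have hq : HasDerivAt (fun t : ℝ => t) 1 (jap γ v) := hasDerivAt_id _
  exact key γ hγ _ _ _ _ x v hx hp hq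

def hfun (γ : ℝ) (mu0 : ℝ → ℝ) (z : E3 × E3) : ℝ :=
  Real.exp (mu0 ‖z.1‖) * (‖z.1‖ * deriv mu0 ‖z.1‖) * jap γ z.2
  + Real.exp (mu0 ‖z.1‖) * ((jap γ z.2)⁻¹ - jap γ z.2)

lemma inner_bracket (γ : ℝ) (hγ : 0 < γ) (mu0 : ℝ → ℝ) (hmu0 : ContDiff ℝ 2 mu0)
    (z : E3 × E3) (hz : z.1 ≠ 0) :
    pb (energy γ mu0) (fun z => dot3 z.1 z.2) z = hfun γ mu0 z := by
  obtain ⟨y, u⟩ := z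
  have hE := energy_hasFDerivAt γ hγ mu0 hmu0 y hz u
  rw [pb_Lc_dot _ _ _ _ _ hE]
  have hr : ‖y‖ ≠ 0 := norm_ne_zero_iff.mpr hz
  have hJ : jap γ u ≠ 0 := (jap_pos γ hγ u).ne'
  have hJ2 := jap_sq γ hγ u
  unfold hfun
  simp only
  field_simp
  linear_combination hJ2

lemma Lc_add (a b c d : ℝ) (x v : E3) :
    Lc a b x v + Lc c d x v = Lc (a + c) (b + d) x v := by
  ext p <;> simp [Lc] <;> ring

lemma hfun_hasFDerivAt (γ : ℝ) (hγ : 0 < γ) (mu0 : ℝ → ℝ) (hmu0 : ContDiff ℝ 2 mu0)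
    (x : E3) (hx : x ≠ 0) (v : E3) :
    HasFDerivAt (hfun γ mu0)
      (Lc (jap γ v * (Real.exp (mu0 ‖x‖) * deriv mu0 ‖x‖ * (‖x‖ * deriv mu0 ‖x‖)
              + Real.exp (mu0 ‖x‖) * (1 * deriv mu0 ‖x‖ + ‖x‖ * deriv (deriv mu0) ‖x‖)) / ‖x‖
           + ((jap γ v)⁻¹ - jap γ v) * (Real.exp (mu0 ‖x‖) * deriv mu0 ‖x‖) / ‖x‖)
          (Real.exp (mu0 ‖x‖) * (‖x‖ * deriv mu0 ‖x‖) * (1 * γ / jap γ v)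
           + Real.exp (mu0 ‖x‖) * ((-(jap γ v ^ 2)⁻¹ - 1) * γ / jap γ v)) x v) (x, v) := by
  have hJ : jap γ v ≠ 0 := (jap_pos γ hγ v).ne'
  have hexp : HasDerivAt (fun r => Real.exp (mu0 r)) (Real.exp (mu0 ‖x‖) * deriv mu0 ‖x‖) ‖x‖ :=
    (((hmu0.differentiable (by norm_num)) ‖x‖).hasDerivAt).exp
  have hp1 : HasDerivAt (fun r => Real.exp (mu0 r) * (r * deriv mu0 r))
      (Real.exp (mu0 ‖x‖) * deriv mu0 ‖x‖ * (‖x‖ * deriv mu0 ‖x‖)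
        + Real.exp (mu0 ‖x‖) * (1 * deriv mu0 ‖x‖ + ‖x‖ * deriv (deriv mu0) ‖x‖)) ‖x‖ :=
    hexp.mul ((hasDerivAt_id ‖x‖).mul (deriv_mu0_hasDerivAt mu0 hmu0 ‖x‖))
  have hq1 : HasDerivAt (fun t : ℝ => t) 1 (jap γ v) := hasDerivAt_id _
  have hq2 : HasDerivAt (fun t : ℝ => t⁻¹ - t) (-(jap γ v ^ 2)⁻¹ - 1) (jap γ v) :=
    (hasDerivAt_inv hJ).sub (hasDerivAt_id _)
  have h1 := key γ hγ _ _ _ _ x v hx hp1 hq1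
  have h2 := key γ hγ _ _ _ _ x v hx hexp hq2
  have := h1.add h2
  rw [Lc_add] at this
  exact this


/-- second identity of Lemma 4.4:
`{E, {E, rw}} = −γ e^{2μ₀} w ( r μ₀'' + μ₀' + 2μ₀'/⟨v⟩² )`. -/
theorem bracket_E_bracket_E_rw
    (γ : ℝ) (hγ : 0 < γ)
    (mu0 : ℝ → ℝ) (hmu0 : ContDiff ℝ 2 mu0)
    (x : E3) (hx : x ≠ 0) (v : E3) :
    pb (energy γ mu0) (pb (energy γ mu0) (fun z => dot3 z.1 z.2)) (x, v) =
      -γ * Real.exp (2 * mu0 ‖x‖) * wrad x v *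
        (‖x‖ * deriv (deriv mu0) ‖x‖ + deriv mu0 ‖x‖
          + 2 * deriv mu0 ‖x‖ / (jap γ v) ^ 2) := by
  have hr : ‖x‖ ≠ 0 := norm_ne_zero_iff.mpr hx
  have hJ : jap γ v ≠ 0 := (jap_pos γ hγ v).ne'
  -- replace the inner bracket by hfun near (x, v)
  have hopen : IsOpen {z : E3 × E3 | z.1 ≠ 0} :=
    isOpen_compl_singleton.preimage continuous_fst
  have hmem : (x, v) ∈ {z : E3 × E3 | z.1 ≠ 0} := hx
  have hev : pb (energy γ mu0) (fun z => dot3 z.1 z.2) =ᶠ[nhds (x, v)] hfun γ mu0 :=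
    Filter.eventually_of_mem (hopen.mem_nhds hmem)
      (fun z hz => inner_bracket γ hγ mu0 hmu0 z hz)
  have hfd : fderiv ℝ (pb (energy γ mu0) (fun z => dot3 z.1 z.2)) (x, v)
      = fderiv ℝ (hfun γ mu0) (x, v) := hev.fderiv_eq
  have pb_congr : ∀ f g h : E3 × E3 → ℝ, ∀ z, fderiv ℝ g z = fderiv ℝ h z →
      pb f g z = pb f h z := by
    intro f g h z hgh; unfold pb; rw [hgh]
  have hred : pb (energy γ mu0) (pb (energy γ mu0) (fun z => dot3 z.1 z.2)) (x, v)
      = pb (energy γ mu0) (hfun γ mu0) (x, v) := pb_congr _ _ _ _ hfd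
  rw [hred, pb_Lc_Lc _ _ _ _ _ _ x v (energy_hasFDerivAt γ hγ mu0 hmu0 x hx v)
    (hfun_hasFDerivAt γ hγ mu0 hmu0 x hx v)]
  rw [wrad, two_mul, Real.exp_add]
  field_simp
  ring
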